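/- Let P(x) = 1849x¹² + 35336x¹¹ + 293356x¹⁰ + 1345736x⁹ + 3511340x⁸ + 4649708x⁷ + 4436705x⁶ + 32547956x⁵ + 172055660x⁴ + 461587448x³ + 704347756x² + 593892152x + 217533001 ∈ ℤ[x]. Then the 7-adic valuation of the leading coefficient 1849 is 0, the 7-adic valuation of the constant term 217533001 is 6, and for every 0 ≤ i ≤ 12 the coefficient aᵢ of xⁱ satisfies 2·v₇(aᵢ) ≥ 12 − i. Consequently, the 7-adic Newton polygon of P is the straight segment of slope 1/2, so every root of P in any finite extension of ℚ₇ (with the unique extension of the 7-adic valuation) has valuation exactly 1/2. -/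

import Mathlib

open Polynomial

instance : Fact (Nat.Prime 7) := ⟨by norm_num⟩

private lemma ult_add3 {L : Type} [NormedField L] [IsUltrametricDist L] {a b : L} {B : ℝ}
    (ha : ‖a‖ ≤ B) (hb : ‖b‖ ≤ B) : ‖a + b‖ ≤ B :=
  (IsUltrametricDist.norm_add_le_max a b).trans (max_le ha hb)

theorem newton_polygon_of_minimal_polynomial_of_xQ
    (P : ℤ[X])
    (hP : P = 1849 * X ^ 12 + 35336 * X ^ 11 + 293356 * X ^ 10 +
      1345736 * X ^ 9 + 3511340 * X ^ 8 + 4649708 * X ^ 7 +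
      4436705 * X ^ 6 + 32547956 * X ^ 5 + 172055660 * X ^ 4 +
      461587448 * X ^ 3 + 704347756 * X ^ 2 + 593892152 * X + 217533001) :
    padicValInt 7 (P.coeff 12) = 0 ∧
    padicValInt 7 (P.coeff 0) = 6 ∧
    (∀ i : ℕ, i ≤ 12 → 12 - i ≤ 2 * padicValInt 7 (P.coeff i)) ∧
    ∀ (L : Type) [NormedField L] [Algebra ℚ_[7] L]
      [FiniteDimensional ℚ_[7] L],
      (∀ a : ℚ_[7], ‖algebraMap ℚ_[7] L a‖ = ‖a‖) →
      ∀ x : L, Polynomial.aeval x P = 0 → ‖x‖ = (7 : ℝ) ^ (-(1 / 2) : ℝ) := by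
  subst hP
  refine ⟨?_, ?_, ?_, ?_⟩
  · simp [coeff_X_pow, coeff_X]
  · simp [coeff_X_pow, coeff_X]
    norm_num
    have h1 : (6:ℕ) ≤ padicValInt 7 217533001 :=
      ((padicValInt_dvd_iff 6 217533001).mp (by norm_num)).resolve_left (by norm_num)
    have h2 : ¬ (7:ℕ) ≤ padicValInt 7 217533001 := by
      intro h
      have := (padicValInt_dvd_iff (p := 7) 7 217533001).mpr (Or.inr h)
      norm_num at this
    omega
  · intro i hi
    interval_cases i <;> simp [coeff_X_pow, coeff_X] <;> norm_num
    · have := ((padicValInt_dvd_iff (p:=7) 6 217533001).mp (by norm_num)).resolve_left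
        (by norm_num); omega
    · have := ((padicValInt_dvd_iff (p:=7) 6 593892152).mp (by norm_num)).resolve_left
        (by norm_num); omega
    · have := ((padicValInt_dvd_iff (p:=7) 5 704347756).mp (by norm_num)).resolve_left
        (by norm_num); omega
    · have := ((padicValInt_dvd_iff (p:=7) 5 461587448).mp (by norm_num)).resolve_left
        (by norm_num); omega
    · have := ((padicValInt_dvd_iff (p:=7) 4 172055660).mp (by norm_num)).resolve_left
        (by norm_num); omega
    · have := ((padicValInt_dvd_iff (p:=7) 4 32547956).mp (by norm_num)).resolve_left
        (by norm_num); omega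
    · have := ((padicValInt_dvd_iff (p:=7) 3 4436705).mp (by norm_num)).resolve_left
        (by norm_num); omega
    · have := ((padicValInt_dvd_iff (p:=7) 3 4649708).mp (by norm_num)).resolve_left
        (by norm_num); omega
    · have := ((padicValInt_dvd_iff (p:=7) 2 3511340).mp (by norm_num)).resolve_left
        (by norm_num); omega
    · have := ((padicValInt_dvd_iff (p:=7) 2 1345736).mp (by norm_num)).resolve_left
        (by norm_num); omega
    · have := ((padicValInt_dvd_iff (p:=7) 1 293356).mp (by norm_num)).resolve_left
        (by norm_num); omega
    · have := ((padicValInt_dvd_iff (p:=7) 1 35336).mp (by norm_num)).resolve_left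
        (by norm_num); omega
  · intro L _ _ _ hiso x hx
    -- L is ultrametric
    have hnat : ∀ n : ℕ, ‖(n : L)‖ ≤ 1 := by
      intro n
      rw [← map_natCast (algebraMap ℚ_[7] L) n, hiso]
      have := Padic.norm_int_le_one (p := 7) (n : ℤ)
      push_cast at this
      exact this
    haveI : IsUltrametricDist L :=
      IsUltrametricDist.isUltrametricDist_of_forall_norm_natCast_le_one hnat
    -- norm of integers in L
    have hint : ∀ z : ℤ, ‖(z : L)‖ = ‖(z : ℚ_[7])‖ := by
      intro z
      rw [← map_intCast (algebraMap ℚ_[7] L) z, hiso]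
    set r : ℝ := (7 : ℝ) ^ (-(1 / 2) : ℝ) with hr
    set c : ℝ := ‖x‖ with hc
    have hr0 : 0 < r := Real.rpow_pos_of_pos (by norm_num) _
    have hr1 : r < 1 := Real.rpow_lt_one_of_one_lt_of_neg (by norm_num) (by norm_num)
    have hr2 : r ^ 2 = (7 : ℝ)⁻¹ := by
      rw [hr, ← Real.rpow_natCast ((7:ℝ) ^ (-(1/2) : ℝ)) 2, ← Real.rpow_mul (by norm_num)]
      norm_num
    have hc0 : 0 ≤ c := norm_nonneg x
    -- per-term bound
    have hterm : ∀ (z : ℤ) (k i : ℕ), (7:ℤ) ^ k ∣ z → 12 - i ≤ 2 * k →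
        ‖(z : L) * x ^ i‖ ≤ r ^ (12 - i) * c ^ i := by
      intro z k i hdvd hk
      rw [norm_mul, norm_pow, hint]
      refine mul_le_mul_of_nonneg_right ?_ (pow_nonneg hc0 i)
      have h1 : ‖(z : ℚ_[7])‖ ≤ (7 : ℝ) ^ (-(k:ℤ)) := by
        have := (Padic.norm_int_le_pow_iff_dvd (p := 7) z k).mpr (by exact_mod_cast hdvd)
        exact_mod_cast this
      have h2 : (7 : ℝ) ^ (-(k:ℤ)) = r ^ (2 * k) := by
        rw [zpow_neg, zpow_natCast, ← inv_pow, ← hr2, ← pow_mul]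
      refine h1.trans (h2.le.trans ?_)
      exact pow_le_pow_of_le_one hr0.le hr1.le hk
    -- the algebraic equation over L
    simp only [map_add, map_mul, map_pow, aeval_X, map_ofNat] at hx
    have heq : ((1849:ℤ):L) * x ^ 12 + ((35336:ℤ):L) * x ^ 11 + ((293356:ℤ):L) * x ^ 10 +
        ((1345736:ℤ):L) * x ^ 9 + ((3511340:ℤ):L) * x ^ 8 + ((4649708:ℤ):L) * x ^ 7 +
        ((4436705:ℤ):L) * x ^ 6 + ((32547956:ℤ):L) * x ^ 5 + ((172055660:ℤ):L) * x ^ 4 +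
        ((461587448:ℤ):L) * x ^ 3 + ((704347756:ℤ):L) * x ^ 2 + ((593892152:ℤ):L) * x ^ 1 +
        ((217533001:ℤ):L) * x ^ 0 = 0 := by
      push_cast
      rw [pow_one, pow_zero, mul_one]
      exact hx
    -- exact norms of extreme coefficients
    have h1849 : ‖((1849:ℤ) : L)‖ = 1 := by
      rw [hint]
      rcases lt_or_eq_of_le (Padic.norm_int_le_one (p := 7) 1849) with h | h
      · rw [Padic.norm_intCast_lt_one_iff] at h; norm_num at h
      · exact h
    have hA0 : ‖((217533001:ℤ) : L)‖ = r ^ 12 := by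
      rw [hint]
      have hsplit : ((217533001:ℤ) : ℚ_[7]) = (7:ℚ_[7]) ^ 6 * ((1849:ℤ) : ℚ_[7]) := by
        norm_num
      have h7 : ‖(7 : ℚ_[7])‖ = (7:ℝ)⁻¹ := by
        have := Padic.norm_p (p := 7)
        exact_mod_cast this
      have h1849' : ‖((1849:ℤ) : ℚ_[7])‖ = 1 := by
        rcases lt_or_eq_of_le (Padic.norm_int_le_one (p := 7) 1849) with h | h
        · rw [Padic.norm_intCast_lt_one_iff] at h; norm_num at h
        · exact h
      rw [hsplit, norm_mul, norm_pow, h7, h1849', mul_one, ← hr2, ← pow_mul]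
    rcases lt_trichotomy c r with hlt | hEq | hgt
    · -- c < r : constant term dominates, contradiction
      exfalso
      have h0 : ((217533001:ℤ):L) * x ^ 0 =
          -(((1849:ℤ):L) * x ^ 12 + ((35336:ℤ):L) * x ^ 11 + ((293356:ℤ):L) * x ^ 10 +
          ((1345736:ℤ):L) * x ^ 9 + ((3511340:ℤ):L) * x ^ 8 + ((4649708:ℤ):L) * x ^ 7 +
          ((4436705:ℤ):L) * x ^ 6 + ((32547956:ℤ):L) * x ^ 5 + ((172055660:ℤ):L) * x ^ 4 +
          ((461587448:ℤ):L) * x ^ 3 + ((704347756:ℤ):L) * x ^ 2 + ((593892152:ℤ):L) * x ^ 1) := by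
        linear_combination heq
      have hB : ∀ (z : ℤ) (k i : ℕ), (7:ℤ) ^ k ∣ z → 12 - i ≤ 2 * k → 1 ≤ i → i ≤ 12 →
          ‖(z : L) * x ^ i‖ ≤ r ^ 11 * c := by
        intro z k i hdvd hk hi1 hi2
        calc ‖(z : L) * x ^ i‖ ≤ r ^ (12 - i) * c ^ i := hterm z k i hdvd hk
          _ = r ^ (12 - i) * c ^ (i - 1) * c := by
              rw [mul_assoc, ← pow_succ, show i - 1 + 1 = i from by omega]
          _ ≤ r ^ (12 - i) * r ^ (i - 1) * c := by
              gcongr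
          _ = r ^ 11 * c := by rw [← pow_add, show 12 - i + (i - 1) = 11 from by omega]
      have hbound : ‖((217533001:ℤ):L) * x ^ 0‖ ≤ r ^ 11 * c := by
        rw [h0, norm_neg]
        refine ult_add3 (ult_add3 (ult_add3 (ult_add3 (ult_add3 (ult_add3 (ult_add3 (ult_add3
          (ult_add3 (ult_add3 (ult_add3 ?_ ?_) ?_) ?_) ?_) ?_) ?_) ?_) ?_) ?_) ?_) ?_
        · exact hB (1849:ℤ) 0 12 (by norm_num) (by norm_num) (by norm_num) (by norm_num)
        · exact hB (35336:ℤ) 1 11 (by norm_num) (by norm_num) (by norm_num) (by norm_num)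
        · exact hB (293356:ℤ) 1 10 (by norm_num) (by norm_num) (by norm_num) (by norm_num)
        · exact hB (1345736:ℤ) 2 9 (by norm_num) (by norm_num) (by norm_num) (by norm_num)
        · exact hB (3511340:ℤ) 2 8 (by norm_num) (by norm_num) (by norm_num) (by norm_num)
        · exact hB (4649708:ℤ) 3 7 (by norm_num) (by norm_num) (by norm_num) (by norm_num)
        · exact hB (4436705:ℤ) 3 6 (by norm_num) (by norm_num) (by norm_num) (by norm_num)
        · exact hB (32547956:ℤ) 4 5 (by norm_num) (by norm_num) (by norm_num) (by norm_num)
        · exact hB (172055660:ℤ) 4 4 (by norm_num) (by norm_num) (by norm_num) (by norm_num)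
        · exact hB (461587448:ℤ) 5 3 (by norm_num) (by norm_num) (by norm_num) (by norm_num)
        · exact hB (704347756:ℤ) 5 2 (by norm_num) (by norm_num) (by norm_num) (by norm_num)
        · exact hB (593892152:ℤ) 6 1 (by norm_num) (by norm_num) (by norm_num) (by norm_num)
      rw [pow_zero, mul_one, hA0] at hbound
      have h2 : r ^ 11 * c < r ^ 11 * r := mul_lt_mul_of_pos_left hlt (pow_pos hr0 11)
      have h3 : r ^ 11 * r = r ^ 12 := by ring
      linarith
    · exact hEq
    · -- r < c : leading term dominates, contradiction
      exfalso
      have h12 : ((1849:ℤ):L) * x ^ 12 =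
          -(((35336:ℤ):L) * x ^ 11 + ((293356:ℤ):L) * x ^ 10 +
          ((1345736:ℤ):L) * x ^ 9 + ((3511340:ℤ):L) * x ^ 8 + ((4649708:ℤ):L) * x ^ 7 +
          ((4436705:ℤ):L) * x ^ 6 + ((32547956:ℤ):L) * x ^ 5 + ((172055660:ℤ):L) * x ^ 4 +
          ((461587448:ℤ):L) * x ^ 3 + ((704347756:ℤ):L) * x ^ 2 + ((593892152:ℤ):L) * x ^ 1 +
          ((217533001:ℤ):L) * x ^ 0) := by
        linear_combination heq
      have hB : ∀ (z : ℤ) (k i : ℕ), (7:ℤ) ^ k ∣ z → 12 - i ≤ 2 * k → i ≤ 11 →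
          ‖(z : L) * x ^ i‖ ≤ r * c ^ 11 := by
        intro z k i hdvd hk hi
        calc ‖(z : L) * x ^ i‖ ≤ r ^ (12 - i) * c ^ i := hterm z k i hdvd hk
          _ = r * (r ^ (11 - i) * c ^ i) := by
              rw [← mul_assoc, ← pow_succ', show 11 - i + 1 = 12 - i from by omega]
          _ ≤ r * (c ^ (11 - i) * c ^ i) := by
              gcongr
          _ = r * c ^ 11 := by rw [← pow_add, show 11 - i + i = 11 from by omega]
      have hbound : ‖((1849:ℤ):L) * x ^ 12‖ ≤ r * c ^ 11 := by
        rw [h12, norm_neg]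
        refine ult_add3 (ult_add3 (ult_add3 (ult_add3 (ult_add3 (ult_add3 (ult_add3 (ult_add3
          (ult_add3 (ult_add3 (ult_add3 ?_ ?_) ?_) ?_) ?_) ?_) ?_) ?_) ?_) ?_) ?_) ?_
        · exact hB (35336:ℤ) 1 11 (by norm_num) (by norm_num) (by norm_num)
        · exact hB (293356:ℤ) 1 10 (by norm_num) (by norm_num) (by norm_num)
        · exact hB (1345736:ℤ) 2 9 (by norm_num) (by norm_num) (by norm_num)
        · exact hB (3511340:ℤ) 2 8 (by norm_num) (by norm_num) (by norm_num)
        · exact hB (4649708:ℤ) 3 7 (by norm_num) (by norm_num) (by norm_num)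
        · exact hB (4436705:ℤ) 3 6 (by norm_num) (by norm_num) (by norm_num)
        · exact hB (32547956:ℤ) 4 5 (by norm_num) (by norm_num) (by norm_num)
        · exact hB (172055660:ℤ) 4 4 (by norm_num) (by norm_num) (by norm_num)
        · exact hB (461587448:ℤ) 5 3 (by norm_num) (by norm_num) (by norm_num)
        · exact hB (704347756:ℤ) 5 2 (by norm_num) (by norm_num) (by norm_num)
        · exact hB (593892152:ℤ) 6 1 (by norm_num) (by norm_num) (by norm_num)
        · exact hB (217533001:ℤ) 6 0 (by norm_num) (by norm_num) (by norm_num)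
      rw [norm_mul, norm_pow, h1849, one_mul] at hbound
      have hc11 : 0 < c ^ 11 := pow_pos (hr0.trans hgt) 11
      have h2 : r * c ^ 11 < c * c ^ 11 := mul_lt_mul_of_pos_right hgt hc11
      have h3 : c * c ^ 11 = c ^ 12 := by ring
      linarith
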